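/- Let C be an n×n real symmetric matrix and L₁ ≥ 0 with ‖2C x₁ − 2C x₂‖ ≤ L₁‖x₁ − x₂‖ for all x₁, x₂. Suppose x, y, μ ∈ ℝⁿ and ρ ≥ L₁ satisfy 2Cx + μ = 0 and y ∈ {−1,1}ⁿ. Then L(x, y; μ; ρ) ≥ yᵀCy + ((ρ − L₁)/2)‖x − y‖². In particular, L(x, y; μ; ρ) ≥ min_{z ∈ {−1,1}ⁿ} zᵀCz, so the augmented Lagrangian along any ADMM trajectory with 2Cx^k + μ^k = 0, y^k ∈ {−1,1}ⁿ and ρ^k ≥ L₁ is bounded below. -/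
import Mathlib


/-- Euclidean norm of a vector in `ℝⁿ`. -/
noncomputable def vnorm {n : ℕ} (x : Fin n → ℝ) : ℝ := Real.sqrt (∑ i, (x i) ^ 2)

/-- Euclidean inner product on `ℝⁿ`. -/
def vdot {n : ℕ} (x y : Fin n → ℝ) : ℝ := ∑ i, x i * y i

/-- Vector-form augmented Lagrangian `L(x,y;μ;ρ) = xᵀCx + ⟨μ, x−y⟩ + (ρ/2)‖x−y‖²`. -/
noncomputable def lagr {n : ℕ} (C : Matrix (Fin n) (Fin n) ℝ) (x y μ : Fin n → ℝ)
    (ρ : ℝ) : ℝ :=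
  vdot x (C.mulVec x) + vdot μ (x - y) + ρ / 2 * vnorm (x - y) ^ 2

lemma vnorm_sq {n : ℕ} (x : Fin n → ℝ) : vnorm x ^ 2 = ∑ i, (x i) ^ 2 := by
  rw [vnorm, Real.sq_sqrt (Finset.sum_nonneg fun i _ => sq_nonneg _)]

lemma vdot_le {n : ℕ} (a b : Fin n → ℝ) : vdot a b ≤ vnorm a * vnorm b :=
  Real.sum_mul_le_sqrt_mul_sqrt _ _ _

lemma vdot_symm_mulVec {n : ℕ} {C : Matrix (Fin n) (Fin n) ℝ} (hC : C.IsSymm)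
    (a b : Fin n → ℝ) : vdot a (C.mulVec b) = vdot b (C.mulVec a) := by
  simp only [vdot, Matrix.mulVec, dotProduct, Finset.mul_sum]
  rw [Finset.sum_comm]
  refine Finset.sum_congr rfl fun i _ => Finset.sum_congr rfl fun j _ => ?_
  have := Matrix.IsSymm.apply hC i j
  rw [this]; ring

lemma vdot_sub_left {n : ℕ} (a b c : Fin n → ℝ) :
    vdot (a - b) c = vdot a c - vdot b c := by
  simp [vdot, sub_mul, Finset.sum_sub_distrib]

lemma vdot_sub_right {n : ℕ} (a b c : Fin n → ℝ) :
    vdot a (b - c) = vdot a b - vdot a c := by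
  simp [vdot, mul_sub, Finset.sum_sub_distrib]

/-- if `2Cx + μ = 0`, `y ∈ {−1,1}ⁿ` and `ρ ≥ L₁`, then
`L(x,y;μ;ρ) ≥ yᵀCy + ((ρ−L₁)/2)‖x−y‖²`; in particular `L(x,y;μ;ρ)` is bounded below by the
minimum of `zᵀCz` over `z ∈ {−1,1}ⁿ`. -/
theorem stmt4 {n : ℕ} (C : Matrix (Fin n) (Fin n) ℝ) (hC : C.IsSymm)
    (L1 : ℝ) (hL1 : 0 ≤ L1)
    (hLip : ∀ x₁ x₂ : Fin n → ℝ,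
      vnorm ((2 : ℝ) • C.mulVec x₁ - (2 : ℝ) • C.mulVec x₂) ≤ L1 * vnorm (x₁ - x₂))
    (x y μ : Fin n → ℝ) (ρ : ℝ) (hρ : L1 ≤ ρ)
    (hstat : (2 : ℝ) • C.mulVec x + μ = 0)
    (hy : ∀ i, y i = 1 ∨ y i = -1) :
    lagr C x y μ ρ ≥ vdot y (C.mulVec y) + (ρ - L1) / 2 * vnorm (x - y) ^ 2 ∧
    lagr C x y μ ρ ≥
      sInf {v : ℝ | ∃ z : Fin n → ℝ, (∀ i, z i = 1 ∨ z i = -1) ∧ v = vdot z (C.mulVec z)} := by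
  have hμ : μ = -((2 : ℝ) • C.mulVec x) := eq_neg_of_add_eq_zero_right hstat
  set d : Fin n → ℝ := x - y with hd
  -- key identity: lagr = yᵀCy + (ρ/2)‖d‖² − dᵀCd
  have hvdotμ : vdot μ d = -2 * vdot x (C.mulVec d) := by
    rw [hμ]
    have : vdot (-((2:ℝ) • C.mulVec x)) d = -2 * vdot d (C.mulVec x) := by
      simp [vdot, Finset.mul_sum, Finset.sum_neg_distrib]
      ring_nf
      refine Finset.sum_congr rfl fun i _ => by ring
    rw [this, vdot_symm_mulVec hC]
  have hmulVec_sub : C.mulVec d = C.mulVec x - C.mulVec y := by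
    rw [hd, Matrix.mulVec_sub]
  have hident : lagr C x y μ ρ =
      vdot y (C.mulVec y) + ρ / 2 * vnorm d ^ 2 - vdot d (C.mulVec d) := by
    have h1 : vdot d (C.mulVec d) = vdot d (C.mulVec x) - vdot d (C.mulVec y) := by
      rw [hmulVec_sub, vdot_sub_right]
    have h2 : vdot d (C.mulVec x) = vdot x (C.mulVec x) - vdot y (C.mulVec x) := by
      rw [hd, vdot_sub_left]
    have h3 : vdot d (C.mulVec y) = vdot x (C.mulVec y) - vdot y (C.mulVec y) := by
      rw [hd, vdot_sub_left]
    have h4 : vdot y (C.mulVec x) = vdot x (C.mulVec y) := vdot_symm_mulVec hC y x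
    have h5 : vdot x (C.mulVec d) = vdot x (C.mulVec x) - vdot x (C.mulVec y) := by
      rw [hmulVec_sub, vdot_sub_right]
    rw [lagr, ← hd, hvdotμ]
    rw [h1, h2, h3, h4, h5]
    ring
  -- bound dᵀCd ≤ (L1/2) ‖d‖²
  have hlip : vnorm ((2 : ℝ) • C.mulVec d) ≤ L1 * vnorm d := by
    have := hLip x y
    have he : (2 : ℝ) • C.mulVec x - (2 : ℝ) • C.mulVec y = (2 : ℝ) • C.mulVec d := by
      rw [hmulVec_sub, smul_sub]
    rwa [he, ← hd] at this
  have hnd : 0 ≤ vnorm d := Real.sqrt_nonneg _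
  have hdCd : vdot d (C.mulVec d) ≤ L1 / 2 * vnorm d ^ 2 := by
    have h2 : vdot d ((2 : ℝ) • C.mulVec d) = 2 * vdot d (C.mulVec d) := by
      simp [vdot, Finset.mul_sum]
      refine Finset.sum_congr rfl fun i _ => by ring
    have hcs := vdot_le d ((2 : ℝ) • C.mulVec d)
    have : vnorm d * vnorm ((2 : ℝ) • C.mulVec d) ≤ vnorm d * (L1 * vnorm d) :=
      mul_le_mul_of_nonneg_left hlip hnd
    nlinarith [hcs]
  have hfirst : lagr C x y μ ρ ≥ vdot y (C.mulVec y) + (ρ - L1) / 2 * vnorm d ^ 2 := by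
    rw [hident]
    nlinarith [sq_nonneg (vnorm d)]
  refine ⟨hfirst, ?_⟩
  -- the value set is finite and nonempty
  set S : Set ℝ := {v : ℝ | ∃ z : Fin n → ℝ, (∀ i, z i = 1 ∨ z i = -1) ∧ v = vdot z (C.mulVec z)}
  have hSfin : S.Finite := by
    have hZ : {z : Fin n → ℝ | ∀ i, z i = 1 ∨ z i = -1}.Finite := by
      have : {z : Fin n → ℝ | ∀ i, z i = 1 ∨ z i = -1} ⊆
          Set.pi Set.univ (fun _ : Fin n => ({1, -1} : Set ℝ)) := by
        intro z hz i _
        rcases hz i with h | h <;> simp [h]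
      exact Set.Finite.subset (Set.Finite.pi fun _ => ((Set.finite_singleton (-1)).insert 1)) this
    have : S = (fun z : Fin n → ℝ => vdot z (C.mulVec z)) ''
        {z : Fin n → ℝ | ∀ i, z i = 1 ∨ z i = -1} := by
      ext v
      constructor
      · rintro ⟨z, hz, rfl⟩; exact ⟨z, hz, rfl⟩
      · rintro ⟨z, hz, rfl⟩; exact ⟨z, hz, rfl⟩
    rw [this]
    exact hZ.image _
  have hyS : vdot y (C.mulVec y) ∈ S := ⟨y, hy, rfl⟩
  have hle : sInf S ≤ vdot y (C.mulVec y) := csInf_le (hSfin.bddBelow) hyS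
  have : 0 ≤ (ρ - L1) / 2 * vnorm d ^ 2 := by
    apply mul_nonneg
    · linarith
    · exact sq_nonneg _
  linarith [hfirst]
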